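/- For all positive integers s, p and all integers n with 1 ≤ n ≤ s·p + 1, the number of subsets F of the colored set {1₁,…,1_s, …, (n−1)₁,…,(n−1)_s, n} with n ∈ F and min F ≥ p·|F| (where min is taken on numerical values) equals Σ_{k=1}^{⌊(ns+1)/(ps+1)⌋} C((n − k·p)·s, k − 1). -/

import Mathlib

/-- The collection of subsets `F` of the colored set consisting of the `s` colored copies
`(j, c)` (value `j`, color `c ∈ {1, …, s}`) of each `j ∈ {1, …, n-1}` together with `(n, 1)`,
such that `(n,1) ∈ F` and the minimal numerical value of `F` is at least `p * |F|`. -/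
def ColoredSchreier (s p n : ℕ) : Finset (Finset (ℕ × ℕ)) :=
  (((Finset.Ico 1 n) ×ˢ (Finset.Icc 1 s)) ∪ {(n, 1)}).powerset.filter
    fun F => (n, 1) ∈ F ∧ ∀ x ∈ F, p * F.card ≤ x.1

theorem card_coloredSchreier_initial (s p n : ℕ) (hs : 1 ≤ s) (hp : 1 ≤ p)
    (hn1 : 1 ≤ n) (hn2 : n ≤ s * p + 1) :
    (ColoredSchreier s p n).card =
      ∑ k ∈ Finset.Icc 1 ((n * s + 1) / (p * s + 1)), ((n - k * p) * s).choose (k - 1) := by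
  classical
  set M := (n * s + 1) / (p * s + 1) with hM
  have hps : 0 < p * s + 1 := Nat.succ_pos _
  have hmemS : ∀ F, F ∈ ColoredSchreier s p n ↔
      (F ⊆ (Finset.Ico 1 n ×ˢ Finset.Icc 1 s) ∪ {((n : ℕ), (1 : ℕ))} ∧
        ((n, 1) ∈ F ∧ ∀ x ∈ F, p * F.card ≤ x.1)) := by
    intro F
    rw [ColoredSchreier, Finset.mem_filter, Finset.mem_powerset]
  -- every member has cardinality in Icc 1 M
  have hcard : ∀ F ∈ ColoredSchreier s p n, F.card ∈ Finset.Icc 1 M := by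
    intro F hF
    rw [hmemS] at hF
    obtain ⟨hsub, hn, hmin⟩ := hF
    set c := F.card with hc
    have hc1 : 1 ≤ c := Finset.card_pos.mpr ⟨_, hn⟩
    have hpc : p * c ≤ n := hmin _ hn
    -- erase (n,1) is inside Ico (p*c) n ×ˢ Icc 1 s
    have hesub : F.erase (n, 1) ⊆ Finset.Ico (p * c) n ×ˢ Finset.Icc 1 s := by
      intro x hx
      have hxne := Finset.ne_of_mem_erase hx
      have hxF := Finset.mem_of_mem_erase hx
      have hxA : x ∈ Finset.Ico 1 n ×ˢ Finset.Icc 1 s := by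
        rcases Finset.mem_union.mp (hsub hxF) with h | h
        · exact h
        · exact absurd (Finset.mem_singleton.mp h) hxne
      rw [Finset.mem_product] at hxA ⊢
      refine ⟨Finset.mem_Ico.mpr ⟨hmin _ hxF, (Finset.mem_Ico.mp hxA.1).2⟩, hxA.2⟩
    have h1 : c - 1 ≤ (n - p * c) * s := by
      have := Finset.card_le_card hesub
      rw [Finset.card_erase_of_mem hn, Finset.card_product, Nat.card_Ico, Nat.card_Icc] at this
      simpa using this
    rw [Finset.mem_Icc]
    refine ⟨hc1, (Nat.le_div_iff_mul_le hps).mpr ?_⟩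
    have h1' : c - 1 ≤ n * s - p * c * s := by rwa [Nat.sub_mul] at h1
    have h3 : p * c * s ≤ n * s := Nat.mul_le_mul_right s hpc
    have he : c * (p * s + 1) = p * c * s + c := by ring
    omega
  rw [Finset.card_eq_sum_card_fiberwise hcard]
  refine Finset.sum_congr rfl fun k hk => ?_
  rw [Finset.mem_Icc] at hk
  obtain ⟨hk1, hkM⟩ := hk
  have hkle : k * (p * s + 1) ≤ n * s + 1 := (Nat.le_div_iff_mul_le hps).mp hkM
  have hpk : p * k ≤ n := by
    have he : k * (p * s + 1) = p * k * s + k := by ring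
    have h4 : p * k * s ≤ n * s := by omega
    exact Nat.le_of_mul_le_mul_right h4 (by omega)
  -- RHS is card of powersetCard (k-1) of Ico (p*k) n ×ˢ Icc 1 s
  have hrhs : ((n - k * p) * s).choose (k - 1) =
      ((Finset.Ico (p * k) n ×ˢ Finset.Icc 1 s).powersetCard (k - 1)).card := by
    rw [Finset.card_powersetCard, Finset.card_product, Nat.card_Ico, Nat.card_Icc,
      Nat.mul_comm k p]
    simp
  rw [hrhs]
  apply Finset.card_bij (fun F _ => F.erase (n, 1))
  · -- maps into target
    intro F hF
    rw [Finset.mem_filter] at hF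
    obtain ⟨hF, hFk⟩ := hF
    rw [hmemS] at hF
    obtain ⟨hsub, hn, hmin⟩ := hF
    rw [Finset.mem_powersetCard]
    constructor
    · intro x hx
      have hxne := Finset.ne_of_mem_erase hx
      have hxF := Finset.mem_of_mem_erase hx
      have hxA : x ∈ Finset.Ico 1 n ×ˢ Finset.Icc 1 s := by
        rcases Finset.mem_union.mp (hsub hxF) with h | h
        · exact h
        · exact absurd (Finset.mem_singleton.mp h) hxne
      rw [Finset.mem_product] at hxA ⊢
      have := hmin _ hxF
      rw [hFk] at this
      exact ⟨Finset.mem_Ico.mpr ⟨this, (Finset.mem_Ico.mp hxA.1).2⟩, hxA.2⟩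
    · rw [Finset.card_erase_of_mem hn, hFk]
  · -- injective
    intro F1 h1 F2 h2 heq
    rw [Finset.mem_filter, hmemS] at h1 h2
    have e1 : insert ((n : ℕ), (1 : ℕ)) (F1.erase (n, 1)) = F1 :=
      Finset.insert_erase h1.1.2.1
    have e2 : insert ((n : ℕ), (1 : ℕ)) (F2.erase (n, 1)) = F2 :=
      Finset.insert_erase h2.1.2.1
    rw [← e1, ← e2, heq]
  · -- surjective
    intro G hG
    rw [Finset.mem_powersetCard] at hG
    obtain ⟨hGsub, hGcard⟩ := hG
    have hnotin : ((n : ℕ), (1 : ℕ)) ∉ G := by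
      intro h
      have := Finset.mem_product.mp (hGsub h)
      exact absurd (Finset.mem_Ico.mp this.1).2 (lt_irrefl n)
    refine ⟨insert (n, 1) G, ?_, ?_⟩
    · rw [Finset.mem_filter]
      have hcardF : (insert ((n : ℕ), (1 : ℕ)) G).card = k := by
        rw [Finset.card_insert_of_notMem hnotin, hGcard]
        omega
      constructor
      · rw [hmemS]
        refine ⟨?_, Finset.mem_insert_self _ _, ?_⟩
        · intro x hx
          rcases Finset.mem_insert.mp hx with h | h
          · subst h; exact Finset.mem_union_right _ (Finset.mem_singleton_self _)
          · refine Finset.mem_union_left _ ?_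
            have := Finset.mem_product.mp (hGsub h)
            rw [Finset.mem_product]
            refine ⟨Finset.mem_Ico.mpr ⟨?_, (Finset.mem_Ico.mp this.1).2⟩, this.2⟩
            have := (Finset.mem_Ico.mp this.1).1
            have hpk1 : 1 ≤ p * k := Nat.one_le_iff_ne_zero.mpr (by positivity)
            omega
        · intro x hx
          rw [hcardF]
          rcases Finset.mem_insert.mp hx with h | h
          · subst h; exact hpk
          · exact (Finset.mem_Ico.mp (Finset.mem_product.mp (hGsub h)).1).1
      · exact hcardF
    · exact Finset.erase_insert hnotin
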